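/- arXiv:1303.7466 — 8 statements merged into one kernel-verified Lean document; each statement's English description precedes it below -/
import Mathlib

section
/- Let r ≥ 1, let p_1, …, p_r be complex constants with p_r ≠ 0, and let F : ℤ → ℂ be the extended impulse response sequence of A_r (so F_0 = ⋯ = F_{r−2} = 0, F_{r−1} = 1, and F_n = Σ_{j=1}^r p_j F_{n−j} for every integer n). Then every sequence {a_n}_{n≥0} in A_r satisfies, for all n ≥ 0, a_n = a_{r−1} F_n + Σ_{j=0}^{r−2} Σ_{k=j}^{r−2} a_k p_{r+j−k} F_{n−1−j}. -/
/-- If `F : ℤ → ℂ` is the extended impulse response sequence of `A_r`,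
then every sequence `a` in `A_r` satisfies, for all `n ≥ 0`,
`a n = a (r-1) * F n + ∑_{j=0}^{r-2} ∑_{k=j}^{r-2} a k * p (r+j-k) * F (n-1-j)`. -/
theorem statement4 (r : ℕ) (hr : 1 ≤ r) (p : ℕ → ℂ) (hp : p r ≠ 0)
    (F : ℤ → ℂ)
    (hFrec : ∀ n : ℤ, F n = ∑ j ∈ Finset.Icc 1 r, p j * F (n - j))
    (hF0 : ∀ i : ℕ, i < r - 1 → F i = 0) (hF1 : F ((r : ℤ) - 1) = 1)
    (a : ℕ → ℂ) (ha : ∀ n, r ≤ n → a n = ∑ j ∈ Finset.Icc 1 r, p j * a (n - j)) :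
    ∀ n : ℕ, a n =
      a (r - 1) * F n +
        ∑ j ∈ Finset.range (r - 1), ∑ k ∈ Finset.Icc j (r - 2),
          a k * p (r + j - k) * F ((n : ℤ) - 1 - j) := by
  have hF0' : ∀ z : ℤ, 0 ≤ z → z < (r : ℤ) - 1 → F z = 0 := by
    intro z h1 h2
    lift z to ℕ using h1
    exact hF0 z (by omega)
  set c : ℕ → ℂ := fun j => ∑ k ∈ Finset.Icc j (r - 2), a k * p (r + j - k) with hc
  -- Lemma A : for n < r the initial part of the recurrence sum vanishes
  have lemA : ∀ n : ℕ, n < r →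
      ∑ j ∈ Finset.Icc (n + 1) r, p j * F ((n : ℤ) - j) = F n := by
    intro n hn
    have h := hFrec (n : ℤ)
    rw [h]
    have hsplit : ∑ j ∈ Finset.Icc 1 r, p j * F ((n : ℤ) - j)
        = (∑ j ∈ Finset.Ioc 0 n, p j * F ((n : ℤ) - j))
          + ∑ j ∈ Finset.Ioc n r, p j * F ((n : ℤ) - j) := by
      rw [Finset.sum_Ioc_consecutive _ (Nat.zero_le n) (le_of_lt hn)]
      congr 1
    rw [hsplit]
    have hz : ∑ j ∈ Finset.Ioc 0 n, p j * F ((n : ℤ) - j) = 0 := by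
      apply Finset.sum_eq_zero
      intro j hj
      simp only [Finset.mem_Ioc] at hj
      rw [hF0' _ (by omega) (by omega), mul_zero]
    rw [hz, zero_add]
    congr 1
    rw [← Finset.Icc_add_one_left_eq_Ioc]
  -- Base cases: n < r
  have hbase : ∀ m : ℕ, m < r →
      a m = a (r - 1) * F m + ∑ j' ∈ Finset.range (r - 1), c j' * F ((m : ℤ) - 1 - j') := by
    intro m hm
    by_cases hm1 : m = r - 1
    · subst hm1
      have hFm : F (((r - 1 : ℕ) : ℤ)) = 1 := by
        rw [show (((r - 1 : ℕ)) : ℤ) = (r : ℤ) - 1 by omega]; exact hF1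
      rw [hFm]
      have hzero : ∑ j' ∈ Finset.range (r - 1), c j' * F (((r - 1 : ℕ) : ℤ) - 1 - j') = 0 := by
        apply Finset.sum_eq_zero
        intro j' hj'
        simp only [Finset.mem_range] at hj'
        rw [hF0' _ (by omega) (by omega), mul_zero]
      rw [hzero]; ring
    · have hm2 : m < r - 1 := by omega
      have hr2 : 2 ≤ r := by omega
      rw [hF0 m hm2, mul_zero, zero_add]
      rw [Finset.range_eq_Ico,
        ← Finset.sum_Ico_consecutive _ (Nat.zero_le m) (show m ≤ r - 1 by omega)]
      have hz : ∑ j' ∈ Finset.Ico 0 m, c j' * F ((m : ℤ) - 1 - j') = 0 := by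
        apply Finset.sum_eq_zero
        intro j' hj'
        simp only [Finset.mem_Ico] at hj'
        rw [hF0' _ (by omega) (by omega), mul_zero]
      rw [hz, zero_add]
      rw [show Finset.Ico m (r - 1) = Finset.Icc m (r - 2) by
        rw [← Finset.Ico_add_one_right_eq_Icc]; congr 1; omega]
      simp only [hc, Finset.sum_mul]
      have hswap : ∑ j' ∈ Finset.Icc m (r - 2), ∑ k ∈ Finset.Icc j' (r - 2),
            a k * p (r + j' - k) * F ((m : ℤ) - 1 - j')
          = ∑ k ∈ Finset.Icc m (r - 2), ∑ j' ∈ Finset.Icc m k,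
            a k * p (r + j' - k) * F ((m : ℤ) - 1 - j') := by
        rw [Finset.sum_sigma', Finset.sum_sigma']
        apply Finset.sum_nbij' (fun x => (⟨x.2, x.1⟩ : Σ _ : ℕ, ℕ))
          (fun x => (⟨x.2, x.1⟩ : Σ _ : ℕ, ℕ)) <;>
          intros x hx <;>
          simp only [Finset.mem_sigma, Finset.mem_Icc] at * <;>
          first
            | rfl
            | omega
      have hinner : ∀ k ∈ Finset.Icc m (r - 2),
          ∑ j' ∈ Finset.Icc m k, a k * p (r + j' - k) * F ((m : ℤ) - 1 - j')
            = a k * F (((r - 1 + m - k : ℕ) : ℤ)) := by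
        intro k hk
        simp only [Finset.mem_Icc] at hk
        have hstep : ∑ j' ∈ Finset.Icc m k, a k * p (r + j' - k) * F ((m : ℤ) - 1 - j')
            = a k * ∑ j' ∈ Finset.Icc m k, p (r + j' - k) * F ((m : ℤ) - 1 - j') := by
          rw [Finset.mul_sum]
          exact Finset.sum_congr rfl fun _ _ => by ring
        rw [hstep]
        congr 1
        rw [← lemA (r - 1 + m - k) (by omega)]
        apply Finset.sum_nbij' (fun j' => j' + (r - k)) (fun i => i - (r - k)) <;>
          intros x hx <;>
          simp only [Finset.mem_Icc] at *
        · omega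
        · omega
        · omega
        · omega
        · congr 2
          · omega
          · push_cast
            omega
      rw [hswap, Finset.sum_congr rfl hinner]
      rw [Finset.sum_eq_single_of_mem m (Finset.mem_Icc.mpr ⟨le_refl m, by omega⟩)]
      · rw [show ((r - 1 + m - m : ℕ) : ℤ) = (r : ℤ) - 1 by omega, hF1, mul_one]
      · intro k hk hne
        simp only [Finset.mem_Icc] at hk
        rw [hF0 (r - 1 + m - k) (by omega), mul_zero]
  -- The combination satisfies the recurrence for every integer
  have Brec : ∀ n : ℤ,
      a (r - 1) * F n + ∑ j' ∈ Finset.range (r - 1), c j' * F (n - 1 - j')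
        = ∑ j ∈ Finset.Icc 1 r, p j *
            (a (r - 1) * F (n - j) + ∑ j' ∈ Finset.range (r - 1), c j' * F (n - j - 1 - j')) := by
    intro n
    have h2 : ∀ j' ∈ Finset.range (r - 1), c j' * F (n - 1 - j')
        = ∑ j ∈ Finset.Icc 1 r, p j * (c j' * F (n - j - 1 - j')) := by
      intro j' _
      rw [hFrec (n - 1 - j'), Finset.mul_sum]
      apply Finset.sum_congr rfl
      intro j _
      have harg : n - 1 - (j' : ℤ) - j = n - j - 1 - j' := by ring
      rw [harg]; ring
    conv_lhs => rw [hFrec n, Finset.sum_congr rfl h2]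
    rw [Finset.sum_comm, Finset.mul_sum, ← Finset.sum_add_distrib]
    apply Finset.sum_congr rfl
    intro j _
    rw [mul_add, Finset.mul_sum]
    congr 1
    · ring
  -- Main claim by strong induction
  have key : ∀ n : ℕ,
      a n = a (r - 1) * F n + ∑ j' ∈ Finset.range (r - 1), c j' * F ((n : ℤ) - 1 - j') := by
    intro n
    induction n using Nat.strong_induction_on with
    | _ n ih =>
      rcases lt_or_ge n r with h | h
      · exact hbase n h
      · rw [ha n h]
        have hterm : ∀ j ∈ Finset.Icc 1 r, p j * a (n - j)
            = p j * (a (r - 1) * F ((n : ℤ) - j)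
              + ∑ j' ∈ Finset.range (r - 1), c j' * F ((n : ℤ) - j - 1 - j')) := by
          intro j hj
          simp only [Finset.mem_Icc] at hj
          rw [ih (n - j) (by omega)]
          have hcast : ((n - j : ℕ) : ℤ) = (n : ℤ) - j := by omega
          rw [hcast]
        rw [Finset.sum_congr rfl hterm, ← Brec (n : ℤ)]
  intro n
  rw [key n]
  simp only [hc, Finset.sum_mul]
end

section
/- Let r ≥ 1, let p_1, …, p_r be complex constants with p_r ≠ 0, and let F : ℤ → ℂ be the extended impulse response sequence of A_r. Then for all integers k and n with 0 ≤ k ≤ r−2 and 0 ≤ n ≤ r−2, one has Σ_{j=0}^{k} p_{r+j−k} F_{n−1−j} = δ_{k,n}, where δ_{k,n} = 1 if k = n and δ_{k,n} = 0 otherwise. -/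
/-- For the extended impulse response sequence `F : ℤ → ℂ` of `A_r`,
for all `0 ≤ k ≤ r-2` and `0 ≤ n ≤ r-2` one has
`∑_{j=0}^{k} p (r+j-k) * F (n-1-j) = δ_{k,n}`. -/
theorem statement5 (r : ℕ) (hr : 1 ≤ r) (p : ℕ → ℂ) (hp : p r ≠ 0)
    (F : ℤ → ℂ)
    (hFrec : ∀ n : ℤ, F n = ∑ j ∈ Finset.Icc 1 r, p j * F (n - j))
    (hF0 : ∀ i : ℕ, i < r - 1 → F i = 0) (hF1 : F ((r : ℤ) - 1) = 1)
    (k n : ℕ) (hk : k + 2 ≤ r) (hn : n + 2 ≤ r) :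
    ∑ j ∈ Finset.range (k + 1), p (r + j - k) * F ((n : ℤ) - 1 - j) =
      if k = n then 1 else 0 := by
  have hFz : ∀ m : ℤ, 0 ≤ m → m ≤ (r : ℤ) - 2 → F m = 0 := by
    intro m hm1 hm2
    lift m to ℕ using hm1
    exact hF0 m (by omega)
  by_cases hcase : n ≤ k
  · -- use the recurrence at N = n + r - k - 1
    have hrec := hFrec ((n : ℤ) + r - k - 1)
    have hsplit : Finset.Icc 1 r = Finset.Ioc 0 (r - k - 1) ∪ Finset.Ioc (r - k - 1) r := by
      rw [Finset.Ioc_union_Ioc_eq_Ioc (by omega) (by omega), ← Finset.Icc_add_one_left_eq_Ioc, zero_add]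
    rw [hsplit, Finset.sum_union] at hrec
    swap
    · apply Finset.disjoint_left.2
      intro x hx h'x
      simp only [Finset.mem_Ioc] at hx h'x
      omega
    have h1 : ∑ j ∈ Finset.Ioc 0 (r - k - 1), p j * F ((n : ℤ) + r - k - 1 - j) = 0 := by
      apply Finset.sum_eq_zero
      intro j hj
      simp only [Finset.mem_Ioc] at hj
      rw [hFz _ (by omega) (by omega), mul_zero]
    rw [h1, zero_add] at hrec
    have h2 : ∑ j ∈ Finset.range (k + 1), p (r + j - k) * F ((n : ℤ) - 1 - j) =
        ∑ j ∈ Finset.Ioc (r - k - 1) r, p j * F ((n : ℤ) + r - k - 1 - j) := by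
      rw [show Finset.Ioc (r - k - 1) r = Finset.Icc (r - k) r by
        rw [← Finset.Icc_add_one_left_eq_Ioc]; congr 1; omega]
      rw [← Finset.Ico_add_one_right_eq_Icc, Finset.sum_Ico_eq_sum_range,
        show r + 1 - (r - k) = k + 1 by omega]
      apply Finset.sum_congr rfl
      intro j hj
      simp only [Finset.mem_range] at hj
      congr 2
      · omega
      · have : ((r - k + j : ℕ) : ℤ) = (r : ℤ) - k + j := by omega
        rw [this]; ring
    rw [h2, ← hrec]
    by_cases hkn : k = n
    · subst hkn
      rw [if_pos rfl, show (k : ℤ) + r - k - 1 = (r : ℤ) - 1 by ring]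
      exact hF1
    · rw [if_neg hkn]
      exact hFz _ (by omega) (by omega)
  · -- n > k : every term vanishes
    rw [if_neg (by omega)]
    apply Finset.sum_eq_zero
    intro j hj
    simp only [Finset.mem_range] at hj
    rw [hFz _ (by omega) (by omega), mul_zero]
end

section
/- Let p_1, p_2 be complex constants with p_1 ≠ 0 and p_2 ≠ 0, let {F_n} be the impulse response sequence with respect to E_2 = {p_1, p_2}, and let {a_n}_{n≥0} satisfy a_n = p_1 a_{n−1} + p_2 a_{n−2} for n ≥ 2. Assume D := a_1² − a_0 a_1 p_1 − a_0² p_2 ≠ 0, and set c_1 = (a_1 − a_0 p_1)/(p_1 D) and c_2 = −a_1 p_2/(p_1 D). Then for all n ≥ 1, F_n = c_1 a_{n+1} + c_2 a_{n−1}. -/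
/-- The impulse response sequence `F` of `A₂` is expressed in terms of
any sequence `a ∈ A₂` with `D = a₁² - a₀a₁p₁ - a₀²p₂ ≠ 0`:
`F n = c₁ * a (n+1) + c₂ * a (n-1)` for all `n ≥ 1`, where
`c₁ = (a₁ - a₀p₁)/(p₁ D)` and `c₂ = -a₁p₂/(p₁ D)`. -/
theorem statement8 (p₁ p₂ : ℂ) (hp₁ : p₁ ≠ 0) (hp₂ : p₂ ≠ 0)
    (F : ℕ → ℂ) (hF0 : F 0 = 0) (hF1 : F 1 = 1)
    (hFrec : ∀ n, 2 ≤ n → F n = p₁ * F (n - 1) + p₂ * F (n - 2))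
    (a : ℕ → ℂ) (harec : ∀ n, 2 ≤ n → a n = p₁ * a (n - 1) + p₂ * a (n - 2))
    (D : ℂ) (hD : D = a 1 ^ 2 - a 0 * a 1 * p₁ - a 0 ^ 2 * p₂) (hD0 : D ≠ 0)
    (c₁ c₂ : ℂ) (hc₁ : c₁ = (a 1 - a 0 * p₁) / (p₁ * D))
    (hc₂ : c₂ = -(a 1 * p₂) / (p₁ * D)) :
    ∀ n, 1 ≤ n → F n = c₁ * a (n + 1) + c₂ * a (n - 1) := by
  have hpD : p₁ * D ≠ 0 := mul_ne_zero hp₁ hD0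
  have ha2 : a 2 = p₁ * a 1 + p₂ * a 0 := harec 2 (by norm_num)
  have ha3 : a 3 = p₁ * a 2 + p₂ * a 1 := harec 3 (by norm_num)
  have hF2 : F 2 = p₁ * 1 + p₂ * 0 := by
    have := hFrec 2 (by norm_num); simpa [hF0, hF1] using this
  have key : ∀ n, F (n + 1) = c₁ * a (n + 2) + c₂ * a n := by
    intro n
    induction n using Nat.strong_induction_on with
    | _ n ih =>
      match n, ih with
      | 0, _ =>
        rw [hF1, hc₁, hc₂, ha2]
        field_simp
        linear_combination p₁ * hD
      | 1, _ =>
        rw [hF2, hc₁, hc₂, ha3, ha2]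
        field_simp
        linear_combination p₁ ^ 2 * hD
      | (m + 2), ih =>
        have h1 := ih (m + 1) (by omega)
        have h0 := ih m (by omega)
        have hF := hFrec (m + 3) (by omega)
        have ha := harec (m + 4) (by omega)
        have ha' := harec (m + 2) (by omega)
        rw [show m + 3 - 2 = m + 1 from rfl, show m + 3 - 1 = m + 2 from rfl] at hF
        rw [show m + 4 - 2 = m + 2 from rfl, show m + 4 - 1 = m + 3 from rfl] at ha
        rw [show m + 2 - 2 = m from rfl, show m + 2 - 1 = m + 1 from rfl] at ha'
        show F (m + 3) = c₁ * a (m + 4) + c₂ * a (m + 2)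
        linear_combination hF + p₁ * h1 + p₂ * h0 - c₁ * ha - c₂ * ha'
  intro n hn
  obtain ⟨m, rfl⟩ := Nat.exists_eq_add_of_le hn
  have := key m
  simpa [Nat.add_comm 1 m] using this
end

section
/- Let p_1, p_2 be complex constants with p_2 ≠ 0, and let F : ℤ → ℂ be the extended impulse response sequence with respect to E_2 = {p_1, p_2}. Then for every m ≥ 1, every n ≥ 0, and every integer r, F_{r+mn} = Σ_{j=0}^{n} C(n,j) (F_m)^j (p_2 F_{m−1})^{n−j} F_{r+j}, where C(n,j) is the binomial coefficient. -/
/-- Nonlinear expression for the extended impulse response sequence: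
`F (r + m*n) = ∑_{j=0}^n C(n,j) (F m)^j (p₂ F (m-1))^(n-j) F (r+j)`. -/
theorem statement11 (p₁ p₂ : ℂ) (hp₂ : p₂ ≠ 0)
    (F : ℤ → ℂ) (hF0 : F 0 = 0) (hF1 : F 1 = 1)
    (hrec : ∀ n : ℤ, F n = p₁ * F (n - 1) + p₂ * F (n - 2)) :
    ∀ (m n : ℕ), 1 ≤ m → ∀ r : ℤ,
      F (r + (m : ℤ) * n) =
        ∑ j ∈ Finset.range (n + 1),
          (n.choose j : ℂ) * F m ^ j * (p₂ * F ((m : ℤ) - 1)) ^ (n - j) *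
            F (r + j) := by
  -- p₂ * F (-1) = 1
  have hFm1 : p₂ * F (-1) = 1 := by
    have h := hrec 1
    norm_num [hF0, hF1] at h
    linear_combination -h
  -- shift lemma
  have shift : ∀ m : ℕ, ∀ r : ℤ, F (r + m) =
      F m * F (r + 1) + p₂ * F ((m : ℤ) - 1) * F r := by
    intro m
    induction m using Nat.twoStepInduction with
    | zero =>
      intro r
      norm_num [hF0, hFm1]
    | one =>
      intro r
      norm_num [hF0, hF1]
    | more m ih1 ih2 =>
      intro r
      have e1 : r + ((m : ℤ) + 2) = (r + (m + 2)) := by ring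
      have h1 := hrec (r + (m + 2))
      have h2 := ih2 r
      have h3 := ih1 r
      have h4 := hrec ((m : ℤ) + 2)
      have h5 := hrec ((m : ℤ) + 1)
      push_cast at *
      have a1 : r + ((m : ℤ) + 2) - 1 = r + (m + 1) := by ring
      have a2 : r + ((m : ℤ) + 2) - 2 = r + m := by ring
      rw [a1, a2] at h1
      have a3 : (m : ℤ) + 2 - 1 = m + 1 := by ring
      have a4 : (m : ℤ) + 2 - 2 = m := by ring
      have a5 : (m : ℤ) + 1 - 1 = m := by ring
      have a6 : (m : ℤ) + 1 - 2 = m - 1 := by ring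
      rw [a3, a4] at h4
      rw [a5, a6] at h5
      rw [a5] at h2
      rw [a3, h1, h2, h3, h4, h5]
      ring
  intro m n hm
  clear hm
  induction n with
  | zero =>
    intro r
    simp
  | succ n ih =>
    intro r
    set A := F m with hA
    set B := p₂ * F ((m : ℤ) - 1) with hB
    have h1 : F (r + (m : ℤ) * (n + 1)) = A * F ((r + 1) + (m : ℤ) * n) + B * F (r + (m : ℤ) * n) := by
      have h := shift m (r + (m : ℤ) * n)
      have e : r + (m : ℤ) * (n + 1) = r + (m : ℤ) * n + m := by push_cast; ring
      have e2 : (r + 1) + (m : ℤ) * n = r + (m : ℤ) * n + 1 := by ring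
      rw [e, e2, h]
    rw [show ((n+1:ℕ):ℤ) = (n:ℤ)+1 from by push_cast; ring, h1, ih (r + 1), ih r, Finset.mul_sum, Finset.mul_sum]
    rw [Finset.sum_range_succ' (fun j => ((n+1).choose j : ℂ) * A ^ j * B ^ (n + 1 - j) * F (r + j)) (n+1)]
    rw [Finset.sum_range_succ' (fun j => B * ((n.choose j : ℂ) * A ^ j * B ^ (n - j) * F (r + j))) n]
    have main : ∑ j ∈ Finset.range (n+1),
        ((n+1).choose (j+1) : ℂ) * A ^ (j+1) * B ^ (n + 1 - (j+1)) * F (r + (j+1 : ℕ)) =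
        (∑ j ∈ Finset.range (n+1), A * ((n.choose j : ℂ) * A ^ j * B ^ (n - j) * F (r + 1 + j)))
        + ∑ j ∈ Finset.range n, B * ((n.choose (j+1) : ℂ) * A ^ (j+1) * B ^ (n - (j+1)) * F (r + (j+1 : ℕ))) := by
      have step : ∀ j ∈ Finset.range (n+1),
          ((n+1).choose (j+1) : ℂ) * A ^ (j+1) * B ^ (n + 1 - (j+1)) * F (r + (j+1 : ℕ)) =
          A * ((n.choose j : ℂ) * A ^ j * B ^ (n - j) * F (r + 1 + j))
          + B * ((n.choose (j+1) : ℂ) * A ^ (j+1) * B ^ (n - (j+1)) * F (r + (j+1 : ℕ))) := by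
        intro j hj
        rw [Finset.mem_range] at hj
        rw [Nat.choose_succ_succ]
        have e1 : n + 1 - (j + 1) = n - j := by omega
        have e2 : r + 1 + (j : ℤ) = r + ((j : ℕ) + 1 : ℕ) := by push_cast; ring
        rcases Nat.lt_or_ge j n with h | h
        · have e3 : n - j = (n - (j+1)) + 1 := by omega
          rw [e1, e2, e3]
          push_cast
          ring
        · have hjn : j = n := by omega
          subst hjn
          rw [e1, e2]
          simp [Nat.choose_succ_self]
          ring
      rw [Finset.sum_congr rfl step, Finset.sum_add_distrib]
      congr 1
      rw [Finset.sum_range_succ]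
      simp [Nat.choose_succ_self]
    rw [main]
    simp only [Nat.sub_zero, Nat.choose_zero_right, Nat.cast_one]
    push_cast
    ring
end

section
/- Let p_1, p_2 be complex constants with p_2 ≠ 0, and let F : ℤ → ℂ be the extended impulse response sequence with respect to E_2 = {p_1, p_2}. Then for every m ≥ 1 and n ≥ 0 the following three identities hold: (i) Σ_{j=0}^{n} p_2^{n−j+1} C(n,j) (F_m)^j (F_{m−1})^{n−j} F_{j−mn−1} = 1; (ii) Σ_{j=0}^{n} p_2^{n−j} C(n,j) (F_m)^j (F_{m−1})^{n−j} F_{j−mn} = 0; (iii) Σ_{j=0}^{n} p_2^{n−j} C(n,j) (F_m)^j (F_{m−1})^{n−j} F_{j−mn+1} = 1. -/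
/-- Three identities for the extended impulse response sequence `F : ℤ → ℂ`
with respect to `E₂ = {p₁, p₂}`, valid for all `m ≥ 1` and `n ≥ 0`. -/
theorem statement12 (p₁ p₂ : ℂ) (hp₂ : p₂ ≠ 0)
    (F : ℤ → ℂ) (hF0 : F 0 = 0) (hF1 : F 1 = 1)
    (hrec : ∀ n : ℤ, F n = p₁ * F (n - 1) + p₂ * F (n - 2)) :
    ∀ (m n : ℕ), 1 ≤ m →
      (∑ j ∈ Finset.range (n + 1),
          p₂ ^ (n - j + 1) * (n.choose j : ℂ) * F m ^ j * F ((m : ℤ) - 1) ^ (n - j) *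
            F ((j : ℤ) - (m : ℤ) * n - 1) = 1) ∧
      (∑ j ∈ Finset.range (n + 1),
          p₂ ^ (n - j) * (n.choose j : ℂ) * F m ^ j * F ((m : ℤ) - 1) ^ (n - j) *
            F ((j : ℤ) - (m : ℤ) * n) = 0) ∧
      (∑ j ∈ Finset.range (n + 1),
          p₂ ^ (n - j) * (n.choose j : ℂ) * F m ^ j * F ((m : ℤ) - 1) ^ (n - j) *
            F ((j : ℤ) - (m : ℤ) * n + 1) = 1) := by
  have hFm1 : p₂ * F (-1) = 1 := by
    have h := hrec 1
    norm_num [hF0, hF1] at h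
    exact h.symm
  -- addition formula
  have hadd : ∀ (mm : ℕ) (t : ℤ),
      F (t + mm) = F mm * F (t + 1) + p₂ * F ((mm : ℤ) - 1) * F t := by
    intro mm
    induction mm using Nat.twoStepInduction with
    | zero =>
      intro t
      push_cast
      rw [hF0, add_zero]
      linear_combination -F t * hFm1
    | one =>
      intro t
      push_cast
      norm_num [hF1, hF0]
    | more mm ih1 ih2 =>
      intro t
      have e1 := hrec (t + mm + 2)
      have e2 := hrec ((mm : ℤ) + 2)
      have e3 := hrec ((mm : ℤ) + 1)
      have h1 := ih1 t
      have h2 := ih2 t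
      push_cast at h1 h2 ⊢
      rw [show (t + (mm:ℤ) + 2 - 1) = t + (mm:ℤ) + 1 by ring,
          show (t + (mm:ℤ) + 2 - 2) = t + (mm:ℤ) by ring] at e1
      rw [show ((mm:ℤ) + 2 - 1) = (mm:ℤ) + 1 by ring,
          show ((mm:ℤ) + 2 - 2) = (mm:ℤ) by ring] at e2
      rw [show ((mm:ℤ) + 1 - 1) = (mm:ℤ) by ring,
          show ((mm:ℤ) + 1 - 2) = (mm:ℤ) - 1 by ring] at e3
      rw [show ((mm:ℤ) + 1 - 1) = (mm:ℤ) by ring] at h2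
      rw [show (t + ((mm:ℤ) + 2)) = t + (mm:ℤ) + 2 by ring,
          show ((mm:ℤ) + 2 - 1) = (mm:ℤ) + 1 by ring]
      rw [show (t + ((mm:ℤ) + 1)) = t + (mm:ℤ) + 1 by ring] at h2
      linear_combination e1 + p₁ * h2 + p₂ * h1 - F (t + 1) * e2 - p₂ * F t * e3
  -- key binomial expansion
  have key : ∀ (mm n : ℕ) (k : ℤ),
      F (k + (mm : ℤ) * n) = ∑ j ∈ Finset.range (n + 1),
        (n.choose j : ℂ) * F mm ^ j * (p₂ * F ((mm : ℤ) - 1)) ^ (n - j) * F (k + j) := by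
    intro mm n
    induction n with
    | zero => intro k; simp
    | succ n ih =>
      intro k
      set a : ℂ := F mm with ha
      set b : ℂ := p₂ * F ((mm : ℤ) - 1) with hb
      rw [show ((n + 1 : ℕ) : ℤ) = (n : ℤ) + 1 by push_cast; ring]
      have h1 : F (k + (mm : ℤ) * ((n : ℤ) + 1))
          = a * F ((k + 1) + (mm : ℤ) * n) + b * F (k + (mm : ℤ) * n) := by
        have hh := hadd mm (k + (mm : ℤ) * n)
        rw [show k + (mm : ℤ) * ((n:ℤ) + 1) = (k + (mm : ℤ) * n) + mm by ring, hh]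
        rw [show (k + (mm : ℤ) * n + 1) = (k + 1) + (mm : ℤ) * n by ring]
      rw [h1, ih (k + 1), ih k]
      -- step1 : b * S0 = sum with exponent n+1-j over range (n+1)
      have step1 : b * (∑ j ∈ Finset.range (n+1), (n.choose j : ℂ) * a ^ j * b ^ (n - j) * F (k + j))
          = ∑ j ∈ Finset.range (n+1), (n.choose j : ℂ) * a ^ j * b ^ (n + 1 - j) * F (k + j) := by
        rw [Finset.mul_sum]
        apply Finset.sum_congr rfl
        intro j hj
        simp only [Finset.mem_range] at hj
        rw [show n + 1 - j = (n - j) + 1 by omega, pow_succ]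
        ring
      have step2 : (∑ j ∈ Finset.range (n+1+1), (n.choose j : ℂ) * a ^ j * b ^ (n + 1 - j) * F (k + j))
          = ∑ j ∈ Finset.range (n+1), (n.choose j : ℂ) * a ^ j * b ^ (n + 1 - j) * F (k + j) := by
        rw [Finset.sum_range_succ]
        simp [Nat.choose_succ_self]
      have step3 := Finset.sum_range_succ'
        (fun j : ℕ => (n.choose j : ℂ) * a ^ j * b ^ (n + 1 - j) * F (k + j)) (n+1)
      have step4 := Finset.sum_range_succ'
        (fun j : ℕ => ((n+1).choose j : ℂ) * a ^ j * b ^ (n + 1 - j) * F (k + j)) (n+1)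
      rw [step4]
      simp only [Nat.choose_zero_right, Nat.cast_one, pow_zero, Nat.cast_zero, add_zero,
        Nat.sub_zero, one_mul, Nat.cast_ofNat] at step3 step4 ⊢
      -- now expand the shifted sum termwise
      have split : (∑ j ∈ Finset.range (n+1),
            ((n+1).choose (j+1) : ℂ) * a ^ (j+1) * b ^ (n + 1 - (j+1)) * F (k + ((j:ℕ)+1 : ℕ)))
          = (∑ j ∈ Finset.range (n+1), a * ((n.choose j : ℂ) * a ^ j * b ^ (n - j) * F ((k+1) + j)))
            + (∑ j ∈ Finset.range (n+1),
                (n.choose (j+1) : ℂ) * a ^ (j+1) * b ^ (n + 1 - (j+1)) * F (k + ((j:ℕ)+1 : ℕ))) := by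
        rw [← Finset.sum_add_distrib]
        apply Finset.sum_congr rfl
        intro j hj
        simp only [Finset.mem_range] at hj
        have hch : ((n+1).choose (j+1) : ℂ) = (n.choose j : ℂ) + (n.choose (j+1) : ℂ) := by
          rw [← Nat.cast_add, Nat.choose_succ_succ']
        rw [hch]
        have harg : (k + ((j:ℕ)+1 : ℕ)) = (k + 1) + (j : ℤ) := by omega
        rw [harg, show n + 1 - (j + 1) = n - j by omega]
        ring
      rw [split, ← Finset.mul_sum]
      -- remaining: a*S1 + (shifted n-sum) + b^{n+1} F k = a*S1 + b*S0, i.e. use step1..step3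
      have comb : (∑ j ∈ Finset.range (n+1),
            (n.choose (j+1) : ℂ) * a ^ (j+1) * b ^ (n + 1 - (j+1)) * F (k + ((j:ℕ)+1 : ℕ)))
            + b ^ (n+1) * F k
          = b * (∑ j ∈ Finset.range (n+1), (n.choose j : ℂ) * a ^ j * b ^ (n - j) * F (k + j)) := by
        rw [step1, ← step2, step3]
      linear_combination -comb
  intro m n hm
  refine ⟨?_, ?_, ?_⟩
  · have hk := key m n (-1 - (m : ℤ) * n)
    rw [show (-1 - (m : ℤ) * n + (m : ℤ) * n) = -1 by ring] at hk
    have heq : (∑ j ∈ Finset.range (n + 1),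
        p₂ ^ (n - j + 1) * (n.choose j : ℂ) * F m ^ j * F ((m : ℤ) - 1) ^ (n - j) *
          F ((j : ℤ) - (m : ℤ) * n - 1))
        = p₂ * ∑ j ∈ Finset.range (n + 1),
          (n.choose j : ℂ) * F m ^ j * (p₂ * F ((m : ℤ) - 1)) ^ (n - j) * F ((-1 - (m : ℤ) * n) + j) := by
      rw [Finset.mul_sum]
      apply Finset.sum_congr rfl
      intro j hj
      rw [show ((-1 : ℤ) - (m : ℤ) * n + j) = (j : ℤ) - (m : ℤ) * n - 1 by ring, mul_pow, pow_succ]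
      ring
    rw [heq, ← hk, hFm1]
  · have hk := key m n (0 - (m : ℤ) * n)
    rw [show ((0 : ℤ) - (m : ℤ) * n + (m : ℤ) * n) = 0 by ring, hF0] at hk
    have heq : (∑ j ∈ Finset.range (n + 1),
        p₂ ^ (n - j) * (n.choose j : ℂ) * F m ^ j * F ((m : ℤ) - 1) ^ (n - j) *
          F ((j : ℤ) - (m : ℤ) * n))
        = ∑ j ∈ Finset.range (n + 1),
          (n.choose j : ℂ) * F m ^ j * (p₂ * F ((m : ℤ) - 1)) ^ (n - j) * F ((0 - (m : ℤ) * n) + j) := by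
      apply Finset.sum_congr rfl
      intro j hj
      rw [show ((0 : ℤ) - (m : ℤ) * n + j) = (j : ℤ) - (m : ℤ) * n by ring, mul_pow]
      ring
    rw [heq, ← hk]
  · have hk := key m n (1 - (m : ℤ) * n)
    rw [show ((1 : ℤ) - (m : ℤ) * n + (m : ℤ) * n) = 1 by ring, hF1] at hk
    have heq : (∑ j ∈ Finset.range (n + 1),
        p₂ ^ (n - j) * (n.choose j : ℂ) * F m ^ j * F ((m : ℤ) - 1) ^ (n - j) *
          F ((j : ℤ) - (m : ℤ) * n + 1))
        = ∑ j ∈ Finset.range (n + 1),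
          (n.choose j : ℂ) * F m ^ j * (p₂ * F ((m : ℤ) - 1)) ^ (n - j) * F ((1 - (m : ℤ) * n) + j) := by
      apply Finset.sum_congr rfl
      intro j hj
      rw [show ((1 : ℤ) - (m : ℤ) * n + j) = (j : ℤ) - (m : ℤ) * n + 1 by ring, mul_pow]
      ring
    rw [heq, ← hk]
end

section
/- Let p_1, p_2 be integers with p_2 ≠ 0, and let {F_n}_{n≥0} be the integer impulse response sequence with respect to E_2 = {p_1, p_2}. (i) If m, n ≥ 1 and gcd(F_m, F_n) = 1, then F_m · F_n divides F_{mn}. (ii) More generally, if m_1, …, m_s ≥ 1 and F_{m_1}, …, F_{m_s} are pairwise coprime, then the product F_{m_1} F_{m_2} ⋯ F_{m_s} divides F_{m_1 m_2 ⋯ m_s}. -/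
/-- For the integer impulse response sequence `F` with respect to
`E₂ = {p₁, p₂}`: (i) if `m, n ≥ 1` and `F m`, `F n` are coprime then
`F m * F n ∣ F (m*n)`; (ii) if `F (m 1), …, F (m s)` are pairwise coprime
(with each `m i ≥ 1`) then `∏ F (m i) ∣ F (∏ m i)`. -/
theorem statement14 (p₁ p₂ : ℤ) (hp₂ : p₂ ≠ 0)
    (F : ℕ → ℤ) (hF0 : F 0 = 0) (hF1 : F 1 = 1)
    (hrec : ∀ n, 2 ≤ n → F n = p₁ * F (n - 1) + p₂ * F (n - 2)) :
    (∀ m n : ℕ, 1 ≤ m → 1 ≤ n → IsCoprime (F m) (F n) →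
      F m * F n ∣ F (m * n)) ∧
    (∀ (s : ℕ) (m : Fin s → ℕ), (∀ i, 1 ≤ m i) →
      (∀ i j, i ≠ j → IsCoprime (F (m i)) (F (m j))) →
      (∏ i, F (m i)) ∣ F (∏ i, m i)) := by
  have hrec' : ∀ n : ℕ, F (n + 2) = p₁ * F (n + 1) + p₂ * F n := by
    intro n
    have := hrec (n + 2) (by omega)
    simpa using this
  -- addition formula
  have hadd : ∀ a b : ℕ, F (a + b + 1) = F (a + 1) * F (b + 1) + p₂ * F a * F b := by
    intro a
    induction a using Nat.strong_induction_on with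
    | _ a ih =>
      match a with
      | 0 => intro b; simp [hF0, hF1]
      | 1 =>
        intro b
        have h2 : F 2 = p₁ := by have := hrec' 0; simp [hF0, hF1] at this; simpa using this
        have : F (1 + b + 1) = F (b + 2) := by ring_nf
        rw [this, hrec' b, h2, hF1]; ring
      | (a + 2) =>
        intro b
        have e1 : a + 2 + b + 1 = (a + b + 1) + 2 := by omega
        have e2 : a + b + 1 + 1 = (a + 1) + b + 1 := by omega
        rw [e1, hrec' (a + b + 1), e2, ih (a + 1) (by omega) b, ih a (by omega) b,
          show a + 1 + 1 = a + 2 by omega, show a + 2 + 1 = a + 1 + 2 by omega,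
          hrec' (a + 1), show a + 1 + 1 = a + 2 by omega, hrec' a]
        ring
  -- F m divides F (m * k)
  have hdvd : ∀ m k : ℕ, 1 ≤ m → F m ∣ F (m * k) := by
    intro m k hm
    induction k with
    | zero => simp [hF0]
    | succ k ih =>
      obtain ⟨a, rfl⟩ : ∃ a, m = a + 1 := ⟨m - 1, by omega⟩
      have e : (a + 1) * (k + 1) = a + (a + 1) * k + 1 := by ring
      rw [e, hadd a ((a + 1) * k)]
      exact dvd_add (Dvd.intro _ rfl) (Dvd.dvd.mul_left ih _)
  refine ⟨fun m n hm hn hco => ?_, ?_⟩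
  · exact hco.mul_dvd (hdvd m n hm) (by rw [mul_comm]; exact hdvd n m hn)
  · intro s
    induction s with
    | zero => intro m _ _; simp [hF1]
    | succ s ih =>
      intro m hm hco
      rw [Fin.prod_univ_succ, Fin.prod_univ_succ (f := m)]
      have hP : (∏ i : Fin s, F (m i.succ)) ∣ F (∏ i : Fin s, m i.succ) :=
        ih (fun i => m i.succ) (fun i => hm _)
          (fun i j hij => hco _ _ (by simpa using fun h => hij (Fin.succ_injective _ h)))
      have hco0 : IsCoprime (F (m 0)) (∏ i : Fin s, F (m i.succ)) :=
        IsCoprime.prod_right fun i _ => hco 0 i.succ (by simp [Fin.ext_iff])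
      refine hco0.mul_dvd ?_ ?_
      · exact hdvd (m 0) _ (hm 0)
      · have h1 : 1 ≤ ∏ i : Fin s, m i.succ :=
          Finset.one_le_prod' fun i _ => hm i.succ
        have := hdvd (∏ i : Fin s, m i.succ) (m 0) h1
        rw [mul_comm] at this
        exact hP.trans this
end

section
/- Fix an integer k ≥ 1 and define integers p_1, …, p_k by the polynomial identity t^k − Σ_{j=1}^k p_j t^{k−j} = Π_{j=1}^k (t − j). Then the sequence b_n := S(n+1, k) (n ≥ 0), where S denotes the Stirling numbers of the second kind, is the impulse response sequence of the recurrence with coefficients p_1, …, p_k; that is, b_0 = b_1 = ⋯ = b_{k−2} = 0, b_{k−1} = 1, and b_n = Σ_{j=1}^k p_j b_{n−j} for all n ≥ k. -/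
/-- Stirling numbers of the second kind: `stirling n k` counts the partitions of a
set of `n` labelled objects into `k` nonempty unlabelled subsets. -/
def stirling : ℕ → ℕ → ℕ
  | 0, 0 => 1
  | 0, _ + 1 => 0
  | _ + 1, 0 => 0
  | n + 1, k + 1 => (k + 1) * stirling n (k + 1) + stirling n k

def E : Module.End ℤ (ℕ → ℤ) where
  toFun f := fun n => f (n + 1)
  map_add' _ _ := rfl
  map_smul' _ _ := rfl

lemma E_pow (i : ℕ) (f : ℕ → ℤ) (n : ℕ) : (E ^ i) f n = f (n + i) := by
  induction i generalizing f n with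
  | zero => rfl
  | succ i ih =>
    rw [pow_succ, Module.End.mul_apply, ih]
    rfl

lemma stirling_zero (n : ℕ) (h : 1 ≤ n) : stirling n 0 = 0 := by
  cases n with
  | zero => omega
  | succ m => rfl

lemma stirling_one (n : ℕ) (h : 1 ≤ n) : stirling n 1 = 1 := by
  induction n with
  | zero => omega
  | succ m ih =>
    show 1 * stirling m 1 + stirling m 0 = 1
    rcases Nat.eq_zero_or_pos m with rfl | hm
    · rfl
    · rw [stirling_zero m hm, ih hm]

lemma stirling_lt (n k : ℕ) (h : n < k) : stirling n k = 0 := by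
  induction n generalizing k with
  | zero =>
    cases k with
    | zero => omega
    | succ j => rfl
  | succ m ih =>
    obtain ⟨j, rfl⟩ : ∃ j, k = j + 1 := ⟨k - 1, by omega⟩
    show (j + 1) * stirling m (j + 1) + stirling m j = 0
    rw [ih (j+1) (by omega), ih j (by omega)]
    simp

lemma stirling_self (k : ℕ) : stirling k k = 1 := by
  induction k with
  | zero => rfl
  | succ m ih =>
    show (m + 1) * stirling m (m + 1) + stirling m m = 1
    rw [stirling_lt m (m+1) (by omega), ih]
    simp

lemma key (k : ℕ) (hk : 1 ≤ k) :
    ∀ m, 1 ≤ m →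
      (Polynomial.aeval E (∏ j ∈ Finset.Icc 1 k,
          ((Polynomial.X : Polynomial ℤ) - Polynomial.C (j : ℤ))))
        (fun n => (stirling n k : ℤ)) m = 0 := by
  induction k, hk using Nat.le_induction with
  | base =>
    intro m hm
    simp only [Finset.Icc_self, Finset.prod_singleton, map_sub, Polynomial.aeval_X,
      Polynomial.aeval_C, LinearMap.sub_apply, Pi.sub_apply, Module.algebraMap_end_apply,
      Pi.smul_apply, smul_eq_mul]
    show ((stirling (m+1) 1 : ℤ)) - 1 * ((stirling m 1 : ℕ) : ℤ) = 0
    rw [stirling_one (m+1) (by omega), stirling_one m hm]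
    simp
  | succ k hk ih =>
    intro m hm
    rw [Finset.prod_Icc_succ_top (by omega : 1 ≤ k + 1), map_mul, Module.End.mul_apply]
    have hstep : (Polynomial.aeval E
        ((Polynomial.X : Polynomial ℤ) - Polynomial.C ((k+1 : ℕ) : ℤ)))
        (fun n => (stirling n (k+1) : ℤ)) = fun n => (stirling n k : ℤ) := by
      funext n
      simp only [map_sub, Polynomial.aeval_X, Polynomial.aeval_C, LinearMap.sub_apply,
        Pi.sub_apply, Module.algebraMap_end_apply, Pi.smul_apply, smul_eq_mul]
      show (((k + 1) * stirling n (k + 1) + stirling n k : ℕ) : ℤ) - _ = _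
      push_cast
      ring
    rw [hstep]
    exact ih m hm

/-- With integers `p 1, …, p k` defined by
`t^k - ∑_{j=1}^k p j t^(k-j) = ∏_{j=1}^k (t - j)`, the sequence
`b n = S(n+1, k)` is the impulse response sequence of the recurrence with
coefficients `p 1, …, p k`. -/
theorem statement15 (k : ℕ) (hk : 1 ≤ k) (p : ℕ → ℤ)
    (hchar : (Polynomial.X : Polynomial ℤ) ^ k -
        ∑ j ∈ Finset.Icc 1 k, Polynomial.C (p j) * Polynomial.X ^ (k - j) =
      ∏ j ∈ Finset.Icc 1 k, (Polynomial.X - Polynomial.C (j : ℤ)))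
    (b : ℕ → ℤ) (hb : ∀ n, b n = (stirling (n + 1) k : ℤ)) :
    (∀ i, i < k - 1 → b i = 0) ∧ b (k - 1) = 1 ∧
      ∀ n, k ≤ n → b n = ∑ j ∈ Finset.Icc 1 k, p j * b (n - j) := by
  refine ⟨?_, ?_, ?_⟩
  · intro i hi
    rw [hb, stirling_lt (i+1) k (by omega)]
    rfl
  · rw [hb]
    have h1 : k - 1 + 1 = k := by omega
    rw [h1, stirling_self]
    rfl
  · intro n hn
    have H2 : (Polynomial.aeval E ((Polynomial.X : Polynomial ℤ) ^ k -
          ∑ j ∈ Finset.Icc 1 k, Polynomial.C (p j) * Polynomial.X ^ (k - j)))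
          (fun n => (stirling n k : ℤ)) (n + 1 - k) =
        (Polynomial.aeval E (∏ j ∈ Finset.Icc 1 k,
          ((Polynomial.X : Polynomial ℤ) - Polynomial.C (j : ℤ))))
          (fun n => (stirling n k : ℤ)) (n + 1 - k) := by rw [hchar]
    rw [key k hk (n + 1 - k) (by omega)] at H2
    simp only [map_sub, map_sum, map_pow, map_mul, Polynomial.aeval_X, Polynomial.aeval_C,
      LinearMap.sub_apply, Pi.sub_apply, LinearMap.coe_sum, Finset.sum_apply,
      Module.End.mul_apply, Module.algebraMap_end_apply, Pi.smul_apply, smul_eq_mul,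
      E_pow] at H2
    have h1 : n + 1 - k + k = n + 1 := by omega
    rw [h1] at H2
    rw [hb n, ← sub_eq_zero, ← H2]
    congr 1
    apply Finset.sum_congr rfl
    intro j hj
    simp only [Finset.mem_Icc] at hj
    rw [hb (n - j)]
    have h2 : n + 1 - k + (k - j) = n - j + 1 := by omega
    rw [h2]
end

section
/- Let {T_n}_{n≥0} be the tribonacci sequence defined by T_0 = T_1 = 0, T_2 = 1, and T_n = T_{n−1} + T_{n−2} + T_{n−3} for n ≥ 3, and let {a_n}_{n≥0} be the tribonacci-like sequence defined by a_0 = 2, a_1 = 1, a_2 = 1, and a_n = a_{n−1} + a_{n−2} + a_{n−3} for n ≥ 3. Then: (i) for all n ≥ 2, a_n = T_n + 3 T_{n−1} + T_{n−2}; and (ii) for all n ≥ 1, 19 T_n = 6 a_{n+1} − 4 a_n − a_{n−1}. -/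
/-- Interrelations between the tribonacci sequence `T`
(`T 0 = T 1 = 0`, `T 2 = 1`) and the tribonacci-like sequence `a`
(`a 0 = 2`, `a 1 = 1`, `a 2 = 1`), both satisfying
`x n = x (n-1) + x (n-2) + x (n-3)` for `n ≥ 3`. -/
theorem statement17 (T a : ℕ → ℤ)
    (hT0 : T 0 = 0) (hT1 : T 1 = 0) (hT2 : T 2 = 1)
    (hTrec : ∀ n, 3 ≤ n → T n = T (n - 1) + T (n - 2) + T (n - 3))
    (ha0 : a 0 = 2) (ha1 : a 1 = 1) (ha2 : a 2 = 1)
    (harec : ∀ n, 3 ≤ n → a n = a (n - 1) + a (n - 2) + a (n - 3)) :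
    (∀ n, 2 ≤ n → a n = T n + 3 * T (n - 1) + T (n - 2)) ∧
    (∀ n, 1 ≤ n → 19 * T n = 6 * a (n + 1) - 4 * a n - a (n - 1)) := by
  have hT3 : T 3 = 1 := by have := hTrec 3 (by norm_num); simp at this; omega
  have hT4 : T 4 = 2 := by have := hTrec 4 (by norm_num); simp at this; omega
  have ha3 : a 3 = 4 := by have := harec 3 (by norm_num); simp at this; omega
  have ha4 : a 4 = 6 := by have := harec 4 (by norm_num); simp at this; omega
  have hTr : ∀ m : ℕ, T (m + 3) = T (m + 2) + T (m + 1) + T m := by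
    intro m
    have := hTrec (m + 3) (by omega)
    simpa using this
  have har : ∀ m : ℕ, a (m + 3) = a (m + 2) + a (m + 1) + a m := by
    intro m
    have := harec (m + 3) (by omega)
    simpa using this
  have key : ∀ n, a (n + 2) = T (n + 2) + 3 * T (n + 1) + T n := by
    intro n
    induction n using Nat.strong_induction_on with
    | _ n ih =>
      match n with
      | 0 => simp [ha2, hT2, hT1, hT0]
      | 1 => simp [ha3, hT3, hT2, hT1]
      | 2 => simp [ha4, hT4, hT3, hT2]
      | (k + 3) =>
        have e1 := ih k (by omega)
        have e2 := ih (k + 1) (by omega)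
        have e3 := ih (k + 2) (by omega)
        have hA : a (k + 5) = a (k + 4) + a (k + 3) + a (k + 2) := by
          have := har (k + 2); ring_nf at this ⊢; linarith
        have hB := hTr (k + 2)
        have hC := hTr (k + 1)
        have hD := hTr k
        ring_nf at e1 e2 e3 hA hB hC hD ⊢
        linarith
  constructor
  · intro n hn
    obtain ⟨m, rfl⟩ : ∃ m, n = m + 2 := ⟨n - 2, by omega⟩
    simpa using key m
  · intro n hn
    match n, hn with
    | 1, _ => simp [hT1, ha2, ha1, ha0]
    | 2, _ => simp [hT2, ha3, ha2, ha1]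
    | (m + 3), _ =>
      have e1 := key (m + 1)
      have e2 := key (m + 2)
      have e3 := key m
      have hD := hTr m
      have hB := hTr (m + 2)
      have hC := hTr (m + 1)
      rw [show m + 3 - 1 = m + 2 from rfl]
      ring_nf at e1 e2 e3 hB hC hD ⊢
      linarith
end
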